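/- Let H be a k-uniform hypergraph with m edges whose incidence energy BE(H) is a rational number. Then BE(H) is an integer; moreover if k is even then BE(H) is even, and if k is odd then BE(H) ≡ m (mod 2). -/

import Mathlib

open Matrix BigOperators Finset

/-- Incidence matrix of a hypergraph on vertex set `Fin n` with edges `E : Fin m → Finset (Fin n)`. -/
noncomputable def inc {n m : ℕ} (E : Fin m → Finset (Fin n)) : Matrix (Fin n) (Fin m) ℝ :=
  fun v e => if v ∈ E e then 1 else 0

/-- Adjacency matrix of the line multigraph: `(e,f)`-entry is `|E e ∩ E f|` for `e ≠ f`, `0` on diagonal. -/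
noncomputable def lineAdj {n m : ℕ} (E : Fin m → Finset (Fin n)) : Matrix (Fin m) (Fin m) ℝ :=
  fun e f => if e = f then 0 else ((E e ∩ E f).card : ℝ)

/-- Adjacency matrix of the clique multigraph: `(u,v)`-entry is the number of edges containing both. -/
noncomputable def cliqueAdj {n m : ℕ} (E : Fin m → Finset (Fin n)) : Matrix (Fin n) (Fin n) ℝ :=
  fun u v => if u = v then 0 else ((univ.filter fun e => u ∈ E e ∧ v ∈ E e).card : ℝ)

/-- Degree of a vertex: number of edges containing it. -/
def deg {n m : ℕ} (E : Fin m → Finset (Fin n)) (v : Fin n) : ℕ :=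
  (univ.filter fun e => v ∈ E e).card

lemma eval_charpoly_eq' {ι : Type*} [Fintype ι] [DecidableEq ι] (A : Matrix ι ι ℝ) (t : ℝ) :
    A.charpoly.eval t = (Matrix.scalar ι t - A).det := by
  rw [Matrix.charpoly, eval_det, Matrix.matPolyEquiv_charmatrix]
  simp

lemma eig_isIntegral' {n m : ℕ} (E : Fin m → Finset (Fin n))
    (hQ : (inc E * (inc E)ᵀ).IsHermitian) (i : Fin n) :
    IsIntegral ℤ (hQ.eigenvalues i) := by
  classical
  set N : Matrix (Fin n) (Fin n) ℤ :=
    fun u v => ((univ.filter fun e => u ∈ E e ∧ v ∈ E e).card : ℤ) with hN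
  have hmap : N.map (Int.cast : ℤ → ℝ) = inc E * (inc E)ᵀ := by
    ext u v
    simp only [Matrix.map_apply, hN, Matrix.mul_apply, Matrix.transpose_apply, inc]
    show ((#{e | u ∈ E e ∧ v ∈ E e} : ℤ) : ℝ) = _
    push_cast
    rw [Finset.card_filter]
    push_cast
    apply Finset.sum_congr rfl
    intro e _
    by_cases h1 : u ∈ E e <;> by_cases h2 : v ∈ E e <;> simp [h1, h2]
  have hroot : (inc E * (inc E)ᵀ).charpoly.eval (hQ.eigenvalues i) = 0 := by
    rw [eval_charpoly_eq', ← Matrix.exists_mulVec_eq_zero_iff]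
    refine ⟨⇑(hQ.eigenvectorBasis i), fun h0 => hQ.eigenvectorBasis.orthonormal.ne_zero i (by ext j; simpa using congrFun h0 j), ?_⟩
    rw [Matrix.sub_mulVec, hQ.mulVec_eigenvectorBasis i]
    ext j
    simp [Matrix.mulVec, Matrix.scalar_apply, diagonal_dotProduct]
  refine ⟨N.charpoly, N.charpoly_monic, ?_⟩
  rw [Polynomial.eval₂_eq_eval_map, ← Matrix.charpoly_map]
  have : N.map ⇑(algebraMap ℤ ℝ) = N.map (Int.cast : ℤ → ℝ) := rfl
  rw [this, hmap]
  exact hroot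

lemma sum_eig_eq' {n m k : ℕ} (E : Fin m → Finset (Fin n)) (hk : ∀ e, (E e).card = k)
    (hQ : (inc E * (inc E)ᵀ).IsHermitian) :
    ∑ i, hQ.eigenvalues i = (k : ℝ) * m := by
  classical
  have h1 : (inc E * (inc E)ᵀ).trace = ∑ i, hQ.eigenvalues i := by
    conv_lhs => rw [hQ.spectral_theorem]
    rw [Unitary.conjStarAlgAut_apply, Matrix.trace_mul_cycle]
    rw [Matrix.UnitaryGroup.star_mul_self]
    simp [Matrix.trace_diagonal]
  have h2 : (inc E * (inc E)ᵀ).trace = (k : ℝ) * m := by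
    rw [Matrix.trace]
    simp only [Matrix.diag_apply, Matrix.mul_apply, Matrix.transpose_apply, inc]
    rw [Finset.sum_comm]
    have he : ∀ e : Fin m, ∑ v, (if v ∈ E e then (1:ℝ) else 0) * (if v ∈ E e then (1:ℝ) else 0)
        = (k : ℝ) := by
      intro e
      have hb : ∀ v : Fin n, (if v ∈ E e then (1:ℝ) else 0) * (if v ∈ E e then (1:ℝ) else 0)
          = (if v ∈ E e then (1:ℝ) else 0) := by
        intro v; by_cases h : v ∈ E e <;> simp [h]
      rw [Finset.sum_congr rfl (fun v _ => hb v), Finset.sum_boole]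
      simp [Finset.filter_mem_eq_inter, hk e]
    rw [Finset.sum_congr rfl (fun e _ => he e)]
    simp [mul_comm]
  rw [← h1, h2]

lemma int_of_rat_integral' {x : ℝ} (hx : IsIntegral ℤ x) {q : ℚ} (h : x = (q : ℝ)) :
    ∃ z : ℤ, x = (z : ℝ) := by
  have hf : Function.Injective (algebraMap ℚ ℝ) := (algebraMap ℚ ℝ).injective
  have hqint : IsIntegral ℤ q := by
    rw [← isIntegral_algHom_iff ((algebraMap ℚ ℝ).toIntAlgHom) hf]
    simpa [RingHom.toIntAlgHom] using (h ▸ hx : IsIntegral ℤ ((q : ℚ) : ℝ))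
  obtain ⟨z, hz⟩ := IsIntegrallyClosed.isIntegral_iff.mp hqint
  exact ⟨z, by rw [h, ← hz]; simp⟩

/-- if `BE(H)` is rational then it is an integer, even when `k` is even,
and of the same parity as `m` when `k` is odd. -/
theorem stmt5 {n m k : ℕ} (E : Fin m → Finset (Fin n))
    (hk2 : 2 ≤ k) (hk : ∀ e, (E e).card = k)
    (hQ : (inc E * (inc E)ᵀ).IsHermitian)
    (hrat : ∃ q : ℚ, (∑ i, Real.sqrt (hQ.eigenvalues i)) = (q : ℝ)) :
    ∃ z : ℤ, (∑ i, Real.sqrt (hQ.eigenvalues i)) = (z : ℝ) ∧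
      (Even k → Even z) ∧ (Odd k → z % 2 = (m : ℤ) % 2) := by
  classical
  obtain ⟨q, hq⟩ := hrat
  set a : Fin n → ℝ := fun i => Real.sqrt (hQ.eigenvalues i) with ha
  have hP : (inc E * (inc E)ᵀ).PosSemidef := by
    have h := Matrix.posSemidef_self_mul_conjTranspose (inc E)
    have hct : (inc E)ᴴ = (inc E)ᵀ := by
      ext u v; simp [Matrix.conjTranspose_apply]
    rwa [hct] at h
  have hnn : ∀ i, 0 ≤ hQ.eigenvalues i := fun i => hP.eigenvalues_nonneg i
  have haint : ∀ i, IsIntegral ℤ (a i) := by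
    intro i
    apply IsIntegral.of_pow (n := 2) two_pos
    have hsq : a i ^ 2 = hQ.eigenvalues i := Real.sq_sqrt (hnn i)
    rw [hsq]
    exact eig_isIntegral' E hQ i
  have hSint : IsIntegral ℤ (∑ i, a i) := IsIntegral.sum _ (fun i _ => haint i)
  obtain ⟨z, hz⟩ := int_of_rat_integral' hSint hq
  refine ⟨z, hz, ?_⟩
  -- the off-diagonal half sum
  set T : ℝ := ∑ i, ∑ j ∈ univ.filter (fun j => i < j), a i * a j with hT
  have hTint : IsIntegral ℤ T :=
    IsIntegral.sum _ fun i _ => IsIntegral.sum _ fun j _ => (haint i).mul (haint j)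
  have hsq : (∑ i, a i) * (∑ i, a i) = (∑ i, hQ.eigenvalues i) + 2 * T := by
    rw [Finset.sum_mul_sum]
    have hsplit : ∀ i : Fin n, ∑ j, a i * a j = a i * a i +
        ((∑ j ∈ univ.filter (fun j => i < j), a i * a j) +
          ∑ j ∈ univ.filter (fun j => j < i), a i * a j) := by
      intro i
      rw [← Finset.add_sum_erase univ _ (mem_univ i)]
      congr 1
      rw [← Finset.sum_filter_add_sum_filter_not (univ.erase i) (fun j => i < j)]
      congr 1
      · apply Finset.sum_congr _ (fun _ _ => rfl)
        ext j
        simp only [mem_filter, mem_erase, mem_univ, true_and, and_true]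
        exact ⟨fun h => h.2, fun h => ⟨ne_of_gt h, h⟩⟩
      · apply Finset.sum_congr _ (fun _ _ => rfl)
        ext j
        simp only [mem_filter, mem_erase, mem_univ, true_and, and_true]
        constructor
        · rintro ⟨hne, hnlt⟩; exact lt_of_le_of_ne (le_of_not_gt hnlt) hne
        · intro h; exact ⟨ne_of_lt h, not_lt_of_gt h⟩
    rw [Finset.sum_congr rfl fun i _ => hsplit i, Finset.sum_add_distrib, Finset.sum_add_distrib]
    have h1 : ∑ i, a i * a i = ∑ i, hQ.eigenvalues i :=
      Finset.sum_congr rfl fun i _ => Real.mul_self_sqrt (hnn i)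
    have h2 : (∑ i, ∑ j ∈ univ.filter (fun j => j < i), a i * a j) = T := by
      rw [Finset.sum_comm' (t' := (univ : Finset (Fin n)))
        (s' := fun j => univ.filter (fun i => j < i)) (fun x y => by simp)]
      exact Finset.sum_congr rfl fun j _ => Finset.sum_congr rfl fun i _ => mul_comm _ _
    rw [h1, h2, hT]
    ring
  have hkm : (∑ i, a i) * (∑ i, a i) = (k : ℝ) * m + 2 * T := by
    rw [hsq, sum_eig_eq' E hk hQ]
  -- T is rational, hence an integer
  have hTq : T = ((((q : ℚ) * q - (k : ℚ) * m) / 2 : ℚ) : ℝ) := by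
    have : (q : ℝ) * q = (k : ℝ) * m + 2 * T := by rw [← hq]; exact hkm
    push_cast
    linarith
  obtain ⟨t, hzt⟩ := int_of_rat_integral' hTint hTq
  have hZ : z * z = (k : ℤ) * m + 2 * t := by
    have : (z : ℝ) * z = (k : ℝ) * m + 2 * t := by
      rw [← hz, ← hzt]; exact hkm
    exact_mod_cast this
  -- parity bookkeeping
  obtain ⟨c, hc⟩ := Int.even_mul_succ_self (z - 1)
  have hzc : z * z = z + 2 * c := by
    have h' : (z - 1) * (z - 1 + 1) = c + c := hc
    nlinarith [h']
  constructor
  · intro hkeven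
    obtain ⟨d, hd⟩ := hkeven
    have hkd : (k : ℤ) * m = 2 * ((d : ℤ) * m) := by
      have : (k : ℤ) = d + d := by exact_mod_cast hd
      rw [this]; ring
    rw [Int.even_iff]
    omega
  · intro hkodd
    obtain ⟨d, hd⟩ := hkodd
    have hkd : (k : ℤ) * m = 2 * ((d : ℤ) * m) + m := by
      have : (k : ℤ) = 2 * d + 1 := by exact_mod_cast hd
      rw [this]; ring
    omega
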